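/- arXiv:1512.04333 — 2 statements merged into one kernel-verified Lean document; each statement's English description precedes it below -/
import Mathlib

section
/- For all positive integers A, D and real p with 0 < p < 1 and q = 1 - p, we have p^D * ∑_{k=0}^{A-1} C(D+k-1, D-1) * q^k = C(A+D-1, A-1) * p^D * q^A + ∑_{k=0}^{A-1} C(A+D, k) * p^(A+D-k) * q^k. -/
lemma negbinom_aux_sum_step (n D : ℕ) (hn : 0 < n) (p q : ℝ) (hpq : p + q = 1) :
    ∑ k ∈ Finset.range (n+1), ((n+D+1).choose k : ℝ) * p ^ (n+D+1-k) * q ^ k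
    = ∑ k ∈ Finset.range n, ((n+D).choose k : ℝ) * p ^ (n+D-k) * q ^ k
      + ((n+D).choose n : ℝ) * p ^ (D+1) * q ^ n := by
  set S := ∑ k ∈ Finset.range n, ((n+D).choose k : ℝ) * p ^ (n+D-k) * q ^ k with hS
  have hg : ∑ j ∈ Finset.range (n+1), ((n+D).choose j : ℝ) * p ^ (n+D+1-j) * q ^ j
      = p * S + ((n+D).choose n : ℝ) * p ^ (D+1) * q ^ n := by
    rw [Finset.sum_range_succ]
    congr 1
    · rw [hS, Finset.mul_sum]
      refine Finset.sum_congr rfl fun k hk => ?_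
      have hk' := Finset.mem_range.mp hk
      have h1 : n+D+1-k = (n+D-k)+1 := by omega
      rw [h1, pow_succ]
      ring
    · have h2 : n+D+1-n = D+1 := by omega
      rw [h2]
  have hg' : ∑ j ∈ Finset.range (n+1), ((n+D).choose j : ℝ) * p ^ (n+D+1-j) * q ^ j
      = (∑ k ∈ Finset.range n, ((n+D).choose (k+1) : ℝ) * p ^ (n+D-k) * q ^ (k+1))
        + p ^ (n+D+1) := by
    rw [Finset.sum_range_succ']
    simp only [Nat.choose_zero_right, Nat.cast_one, pow_zero, Nat.sub_zero, one_mul, mul_one]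
    congr 1
    refine Finset.sum_congr rfl fun k hk => ?_
    have h3 : n+D+1-(k+1) = n+D-k := by omega
    rw [h3]
  have hmid : (∑ k ∈ Finset.range n, ((n+D).choose (k+1) : ℝ) * p ^ (n+D-k) * q ^ (k+1))
      = p * S + ((n+D).choose n : ℝ) * p ^ (D+1) * q ^ n - p ^ (n+D+1) := by
    have := hg'.symm.trans hg
    linarith
  rw [Finset.sum_range_succ']
  have hq0 : ((n+D+1).choose 0 : ℝ) * p ^ (n+D+1-0) * q ^ 0 = p ^ (n+D+1) := by simp
  rw [hq0]
  have hrw : ∑ k ∈ Finset.range n, ((n+D+1).choose (k+1) : ℝ) * p ^ (n+D+1-(k+1)) * q ^ (k+1)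
      = q * S + (p * S + ((n+D).choose n : ℝ) * p ^ (D+1) * q ^ n - p ^ (n+D+1)) := by
    rw [← hmid, hS, Finset.mul_sum, ← Finset.sum_add_distrib]
    refine Finset.sum_congr rfl fun k hk => ?_
    have h3 : n+D+1-(k+1) = n+D-k := by omega
    have h4 : (n+D+1).choose (k+1) = (n+D).choose k + (n+D).choose (k+1) :=
      Nat.choose_succ_succ (n+D) k
    rw [h3, h4]
    push_cast
    ring
  rw [hrw]
  have : q * S + p * S = S := by linear_combination S * hpq
  linarith

theorem negbinom_eq_binom_plus_correction
    (A D : ℕ) (hA : 0 < A) (hD : 0 < D) (p q : ℝ)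
    (hp : 0 < p) (hp1 : p < 1) (hq : q = 1 - p) :
    p ^ D * ∑ k ∈ Finset.range A, ((D + k - 1).choose (D - 1) : ℝ) * q ^ k =
      ((A + D - 1).choose (A - 1) : ℝ) * p ^ D * q ^ A +
        ∑ k ∈ Finset.range A, ((A + D).choose k : ℝ) * p ^ (A + D - k) * q ^ k := by
  have hpq : p + q = 1 := by rw [hq]; ring
  induction A, hA using Nat.le_induction with
  | base =>
    have e1 : 1 + D - 1 = D := by omega
    have e2 : D + 0 - 1 = D - 1 := by omega
    simp only [Finset.sum_range_one, e1, e2, Nat.choose_self, Nat.cast_one, pow_zero,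
      Nat.sub_self, Nat.choose_zero_right, one_mul, mul_one, Nat.sub_zero, pow_one]
    linear_combination (-(p ^ D)) * hpq
  | succ n hn ih =>
    have e1 : n + 1 + D - 1 = n + D := by omega
    have e3 : n + 1 + D = n + D + 1 := by omega
    have e4 : n + 1 - 1 = n := by omega
    rw [e1, e3, e4, negbinom_aux_sum_step n D hn p q hpq, Finset.sum_range_succ]
    have c1 : ((D + n - 1).choose (D - 1)) = (n + D - 1).choose n := by
      have h := Nat.choose_symm (n := n + D - 1) (k := n) (by omega)
      rw [show n + D - 1 - n = D - 1 by omega] at h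
      rw [show D + n - 1 = n + D - 1 by omega, h]
    have c2 : (n + D - 1).choose (n - 1) + (n + D - 1).choose n = (n + D).choose n := by
      have h := Nat.choose_succ_succ (n + D - 1) (n - 1)
      rw [Nat.succ_eq_add_one, Nat.succ_eq_add_one,
        show n + D - 1 + 1 = n + D by omega, show n - 1 + 1 = n by omega] at h
      omega
    have c1R : ((D + n - 1).choose (D - 1) : ℝ) = ((n + D - 1).choose n : ℝ) := by
      exact_mod_cast c1
    have c2R : ((n + D - 1).choose (n - 1) : ℝ) + ((n + D - 1).choose n : ℝ)
        = ((n + D).choose n : ℝ) := by exact_mod_cast c2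
    linear_combination ih + (p ^ D * q ^ n) * c1R + (p ^ D * q ^ n) * c2R
      - ((n + D).choose n : ℝ) * p ^ D * q ^ n * hpq
end

section
/- For all positive integers A, D and real p with 0 < p < 1 and q = 1 - p, the quantity p^D * ∑_{k=0}^{A-1} C(D+k-1, D-1) * q^k is strictly greater than ∑_{h=0}^{A-1} C(A+D, h) * q^h * p^(A+D-h) and strictly less than ∑_{h=0}^{A} C(A+D, h) * q^h * p^(A+D-h). -/
open Finset

private def FF (p q : ℝ) (m a : ℕ) : ℝ :=
  ∑ h ∈ Finset.range (a + 1), (m.choose h : ℝ) * q ^ h * p ^ (m - h)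

private lemma FF_rec (p q : ℝ) (m a : ℕ) (h : a + 1 ≤ m) :
    FF p q (m + 1) (a + 1) = p * FF p q m (a + 1) + q * FF p q m a := by
  unfold FF
  rw [Finset.sum_range_succ' (fun j => ((m+1).choose j : ℝ) * q ^ j * p ^ (m + 1 - j)) (a+1),
      Finset.sum_range_succ' (fun j => ((m).choose j : ℝ) * q ^ j * p ^ (m - j)) (a+1),
      mul_add, Finset.mul_sum, Finset.mul_sum]
  have hterm : ∀ x ∈ Finset.range (a+1),
      ((m+1).choose (x+1) : ℝ) * q ^ (x+1) * p ^ (m + 1 - (x+1)) =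
        p * ((m.choose (x+1) : ℝ) * q ^ (x+1) * p ^ (m - (x+1)))
        + q * ((m.choose x : ℝ) * q ^ x * p ^ (m - x)) := by
    intro x hx
    rw [Finset.mem_range] at hx
    have e1 : m + 1 - (x+1) = m - x := by omega
    have e2 : m - x = (m - (x+1)) + 1 := by omega
    rw [e1, e2, Nat.choose_succ_succ' m x]
    push_cast
    ring
  rw [Finset.sum_congr rfl hterm, Finset.sum_add_distrib]
  simp [pow_succ]
  ring

private lemma FF_step1 (p q : ℝ) (hq : q = 1 - p) (m a : ℕ) (h : a ≤ m) :
    FF p q (m + 1) a = FF p q m a - q * (m.choose a : ℝ) * q ^ a * p ^ (m - a) := by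
  cases a with
  | zero =>
      unfold FF
      simp [pow_succ, hq]
      ring
  | succ b =>
      rw [FF_rec p q m b h]
      have h2 : FF p q m (b+1) = FF p q m b + (m.choose (b+1) : ℝ) * q^(b+1) * p^(m-(b+1)) := by
        unfold FF; rw [Finset.sum_range_succ]
      rw [h2, hq]; ring

private lemma FF_step2 (p q : ℝ) (hq : q = 1 - p) (m a : ℕ) (h : a + 1 ≤ m) :
    FF p q (m + 1) (a + 1) = FF p q m a + (m.choose (a+1) : ℝ) * q ^ (a+1) * p ^ (m - a) := by
  rw [FF_rec p q m a h]
  have h2 : FF p q m (a+1) = FF p q m a + (m.choose (a+1) : ℝ) * q^(a+1) * p^(m-(a+1)) := by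
    unfold FF; rw [Finset.sum_range_succ]
  have h3 : m - a = (m - (a+1)) + 1 := by omega
  rw [h2, h3, pow_succ, hq]; ring

private lemma FF_key (p q : ℝ) (hq : q = 1 - p) (d : ℕ) (a : ℕ) :
    p ^ (d+1) * ∑ k ∈ Finset.range (a+1), ((d+k).choose d : ℝ) * q ^ k
      = FF p q (a+d+1) a := by
  induction a with
  | zero =>
      unfold FF
      simp
  | succ b ih =>
      rw [Finset.sum_range_succ, mul_add, ih]
      have e : b + 1 + d + 1 = (b + d + 1) + 1 := by omega
      rw [e, FF_step2 p q hq (b+d+1) b (by omega)]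
      have hsym : (b+d+1).choose (b+1) = (d+(b+1)).choose d := by
        rw [show d + (b+1) = b + d + 1 from by omega]
        rw [← Nat.choose_symm (show b+1 ≤ b+d+1 by omega)]
        congr 1
        omega
      have he : b + d + 1 - b = d + 1 := by omega
      rw [hsym, he]
      ring

theorem negbinom_fundamental_estimate
    (A D : ℕ) (hA : 0 < A) (hD : 0 < D) (p q : ℝ)
    (hp : 0 < p) (hp1 : p < 1) (hq : q = 1 - p) :
    (∑ h ∈ Finset.range A, ((A + D).choose h : ℝ) * q ^ h * p ^ (A + D - h) <
      p ^ D * ∑ k ∈ Finset.range A, ((D + k - 1).choose (D - 1) : ℝ) * q ^ k) ∧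
    (p ^ D * ∑ k ∈ Finset.range A, ((D + k - 1).choose (D - 1) : ℝ) * q ^ k <
      ∑ h ∈ Finset.range (A + 1), ((A + D).choose h : ℝ) * q ^ h * p ^ (A + D - h)) := by
  obtain ⟨a, rfl⟩ : ∃ a, A = a + 1 := ⟨A - 1, by omega⟩
  obtain ⟨d, rfl⟩ : ∃ d, D = d + 1 := ⟨D - 1, by omega⟩
  have hq0 : 0 < q := by rw [hq]; linarith
  have hmid : p ^ (d+1) * ∑ k ∈ Finset.range (a+1),
      (((d+1)+k-1).choose ((d+1)-1) : ℝ) * q ^ k = FF p q (a+d+1) a := by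
    rw [← FF_key p q hq d a]
    congr 1
    apply Finset.sum_congr rfl
    intro k _
    have e1 : d+1+k-1 = d+k := by omega
    have e2 : d+1-1 = d := by omega
    rw [e1, e2]
  have hLHS : ∑ h ∈ Finset.range (a+1),
      (((a+1)+(d+1)).choose h : ℝ) * q ^ h * p ^ ((a+1)+(d+1) - h) = FF p q ((a+d+1)+1) a := by
    unfold FF
    apply Finset.sum_congr rfl
    intro h _
    rw [show (a+1)+(d+1) = (a+d+1)+1 from by omega]
  have hRHS : ∑ h ∈ Finset.range ((a+1)+1),
      (((a+1)+(d+1)).choose h : ℝ) * q ^ h * p ^ ((a+1)+(d+1) - h) = FF p q ((a+d+1)+1) (a+1) := by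
    unfold FF
    apply Finset.sum_congr rfl
    intro h _
    rw [show (a+1)+(d+1) = (a+d+1)+1 from by omega]
  rw [hmid, hLHS, hRHS]
  constructor
  · rw [FF_step1 p q hq (a+d+1) a (by omega)]
    have hc : 0 < ((a+d+1).choose a : ℝ) := by
      exact_mod_cast Nat.choose_pos (by omega)
    have := mul_pos (mul_pos (mul_pos hq0 hc) (pow_pos hq0 a)) (pow_pos hp (a+d+1-a))
    linarith
  · rw [FF_step2 p q hq (a+d+1) a (by omega)]
    have hc : 0 < ((a+d+1).choose (a+1) : ℝ) := by
      exact_mod_cast Nat.choose_pos (by omega)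
    have := mul_pos (mul_pos hc (pow_pos hq0 (a+1))) (pow_pos hp (a+d+1-a))
    linarith
end
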